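/- Define κ_α : ℂⁿ → Hermitian n×n matrices by κ_α(x) = (1/‖x‖) x x* for x ≠ 0 and κ_α(0) = 0. Then for all x, y ∈ ℂⁿ, D₂(x,y) ≤ ‖κ_α(x) − κ_α(y)‖_F ≤ √2 · D₂(x,y), where ‖·‖_F is the Frobenius (Hilbert–Schmidt) norm; i.e., κ_α is bi-Lipschitz from (ℂⁿ/∼, D₂) onto the rank-at-most-one positive semidefinite matrices with lower Lipschitz constant 1 and upper Lipschitz constant √2. -/

import Mathlib

open Matrix Finset

/-- Standard inner product on `ℂⁿ`, linear in the first argument. -/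
noncomputable def cip {n : ℕ} (x y : Fin n → ℂ) : ℂ := ∑ i, x i * starRingEnd ℂ (y i)

/-- Squared Euclidean norm on `ℂⁿ`. -/
noncomputable def cnormSq {n : ℕ} (x : Fin n → ℂ) : ℝ := ∑ i, Complex.normSq (x i)

/-- The natural metric `D₂(x,y) = √(‖x‖² + ‖y‖² − 2|⟨x,y⟩|)` on `ℂⁿ/∼`. -/
noncomputable def D2 {n : ℕ} (x y : Fin n → ℂ) : ℝ :=
  Real.sqrt (cnormSq x + cnormSq y - 2 * ‖cip x y‖)

/-- Frobenius (Hilbert–Schmidt) norm of a complex matrix. -/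
noncomputable def frob {n : ℕ} (A : Matrix (Fin n) (Fin n) ℂ) : ℝ :=
  Real.sqrt (∑ i, ∑ j, Complex.normSq (A i j))

/-- The map `κ_α(x) = xx*/‖x‖` (and `κ_α(0) = 0`). -/
noncomputable def kappaAlpha {n : ℕ} (x : Fin n → ℂ) : Matrix (Fin n) (Fin n) ℂ :=
  if x = 0 then 0
  else ((Real.sqrt (cnormSq x))⁻¹ : ℝ) • Matrix.vecMulVec x (star x)

lemma cnormSq_nonneg {n : ℕ} (x : Fin n → ℂ) : 0 ≤ cnormSq x :=
  Finset.sum_nonneg fun _ _ => Complex.normSq_nonneg _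

/-- Key double-sum identity for differences of rank-one matrices. -/
lemma double_sum_id {n : ℕ} (u v : Fin n → ℂ) :
    ∑ i, ∑ j, Complex.normSq (u i * starRingEnd ℂ (u j) - v i * starRingEnd ℂ (v j))
      = (cnormSq u)^2 + (cnormSq v)^2 - 2 * Complex.normSq (cip u v) := by
  have h : ∀ i j, Complex.normSq (u i * starRingEnd ℂ (u j) - v i * starRingEnd ℂ (v j))
      = Complex.normSq (u i) * Complex.normSq (u j) + Complex.normSq (v i) * Complex.normSq (v j)
        - 2 * ((u i * starRingEnd ℂ (v i)) * starRingEnd ℂ (u j * starRingEnd ℂ (v j))).re := by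
    intro i j
    rw [Complex.normSq_sub]
    simp only [Complex.normSq_mul, Complex.normSq_conj]
    congr 2
    congr 1
    simp only [_root_.map_mul, Complex.conj_conj]
    ring
  simp only [h, Finset.sum_sub_distrib, Finset.sum_add_distrib, ← Finset.mul_sum,
    ← Finset.sum_mul, ← Complex.re_sum]
  have h2 : ∑ i, (starRingEnd ℂ) (u i * starRingEnd ℂ (v i)) = starRingEnd ℂ (cip u v) := by
    rw [cip]; exact (_root_.map_sum (starRingEnd ℂ) _ _).symm
  rw [h2, show (∑ i, u i * starRingEnd ℂ (v i)) = cip u v from rfl, Complex.mul_conj,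
    Complex.ofReal_re, cnormSq, cnormSq, sq, sq]

/-- The vector `x` rescaled by `(cnormSq x)^(-1/4)`. -/
noncomputable def kv {n : ℕ} (x : Fin n → ℂ) : Fin n → ℂ :=
  fun i => (Real.sqrt ((Real.sqrt (cnormSq x))⁻¹) : ℝ) * x i

lemma kappa_apply {n : ℕ} (x : Fin n → ℂ) (i j : Fin n) :
    kappaAlpha x i j = kv x i * starRingEnd ℂ (kv x j) := by
  have hs : ((Real.sqrt ((Real.sqrt (cnormSq x))⁻¹) : ℝ) : ℂ) *
      (Real.sqrt ((Real.sqrt (cnormSq x))⁻¹) : ℝ) = (((Real.sqrt (cnormSq x))⁻¹ : ℝ) : ℂ) := by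
    rw [← Complex.ofReal_mul, Real.mul_self_sqrt (inv_nonneg.2 (Real.sqrt_nonneg _))]
  unfold kappaAlpha kv
  split_ifs with h
  · subst h; simp
  · rw [Matrix.smul_apply, Matrix.vecMulVec_apply, Pi.star_apply, Complex.real_smul,
      _root_.map_mul, Complex.conj_ofReal]
    rw [← hs]; simp only [starRingEnd_apply]; ring

lemma cnormSq_kv {n : ℕ} (x : Fin n → ℂ) : cnormSq (kv x) = Real.sqrt (cnormSq x) := by
  have h0 : 0 ≤ cnormSq x := cnormSq_nonneg x
  have h1 : cnormSq (kv x) = (Real.sqrt (cnormSq x))⁻¹ * cnormSq x := by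
    simp only [cnormSq, kv, Complex.normSq_mul, Complex.normSq_ofReal, ← Finset.mul_sum]
    rw [Real.mul_self_sqrt (inv_nonneg.2 (Real.sqrt_nonneg _))]
  rw [h1]
  rcases eq_or_ne (Real.sqrt (cnormSq x)) 0 with h | h
  · have hS : cnormSq x = 0 := by nlinarith [Real.mul_self_sqrt h0]
    simp [hS, h]
  · field_simp
    rw [Real.sq_sqrt h0]

lemma cip_kv {n : ℕ} (x y : Fin n → ℂ) :
    Complex.normSq (cip (kv x) (kv y)) =
      (Real.sqrt (cnormSq x))⁻¹ * (Real.sqrt (cnormSq y))⁻¹ * Complex.normSq (cip x y) := by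
  have key : cip (kv x) (kv y) = ((Real.sqrt ((Real.sqrt (cnormSq x))⁻¹) : ℝ) : ℂ) *
      ((Real.sqrt ((Real.sqrt (cnormSq y))⁻¹) : ℝ) : ℂ) * cip x y := by
    simp only [cip, kv, _root_.map_mul, Complex.conj_ofReal, Finset.mul_sum]
    apply Finset.sum_congr rfl
    intros; ring
  rw [key]
  simp only [Complex.normSq_mul, Complex.normSq_ofReal]
  rw [Real.mul_self_sqrt (inv_nonneg.2 (Real.sqrt_nonneg _)),
    Real.mul_self_sqrt (inv_nonneg.2 (Real.sqrt_nonneg _))]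

/-- Cauchy–Schwarz. -/
lemma abs_cip_le {n : ℕ} (x y : Fin n → ℂ) :
    ‖cip x y‖ ≤ Real.sqrt (cnormSq x) * Real.sqrt (cnormSq y) := by
  let X : EuclideanSpace ℂ (Fin n) := WithLp.toLp 2 x
  let Y : EuclideanSpace ℂ (Fin n) := WithLp.toLp 2 y
  have h := norm_inner_le_norm (𝕜 := ℂ) Y X
  have hi : (inner ℂ Y X : ℂ) = cip x y := by
    rw [PiLp.inner_apply, cip]
    apply Finset.sum_congr rfl
    intro i _
    rw [RCLike.inner_apply]
  have hx : ‖X‖ = Real.sqrt (cnormSq x) := by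
    rw [EuclideanSpace.norm_eq, cnormSq]
    congr 1
    apply Finset.sum_congr rfl
    intro i _
    exact (Complex.normSq_eq_norm_sq _).symm
  have hy : ‖Y‖ = Real.sqrt (cnormSq y) := by
    rw [EuclideanSpace.norm_eq, cnormSq]
    congr 1
    apply Finset.sum_congr rfl
    intro i _
    exact (Complex.normSq_eq_norm_sq _).symm
  rw [hi, hx, hy, mul_comm] at h
  exact h

theorem kappaAlpha_biLipschitz {n : ℕ} (x y : Fin n → ℂ) :
    D2 x y ≤ frob (kappaAlpha x - kappaAlpha y) ∧
    frob (kappaAlpha x - kappaAlpha y) ≤ Real.sqrt 2 * D2 x y := by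
  set A := cnormSq x with hA
  set B := cnormSq y with hB
  set a := Real.sqrt A with ha
  set b := Real.sqrt B with hb
  set t := ‖cip x y‖ with ht
  have hA0 : 0 ≤ A := cnormSq_nonneg x
  have hB0 : 0 ≤ B := cnormSq_nonneg y
  have ha0 : 0 ≤ a := Real.sqrt_nonneg _
  have hb0 : 0 ≤ b := Real.sqrt_nonneg _
  have ha2 : a ^ 2 = A := Real.sq_sqrt hA0
  have hb2 : b ^ 2 = B := Real.sq_sqrt hB0
  have ht0 : 0 ≤ t := norm_nonneg _
  have hCS : t ≤ a * b := abs_cip_le x y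
  have hfrob : frob (kappaAlpha x - kappaAlpha y)
      = Real.sqrt (A + B - 2 * (a⁻¹ * b⁻¹ * t ^ 2)) := by
    rw [frob]
    congr 1
    simp only [Matrix.sub_apply, kappa_apply]
    rw [double_sum_id, cnormSq_kv, cnormSq_kv, cip_kv, ← ha, ← hb,
      ha2, hb2, ← Complex.sq_norm, ← ht]
  have hD2 : D2 x y = Real.sqrt (A + B - 2 * t) := rfl
  -- the key scalar inequalities
  have hmain : a⁻¹ * b⁻¹ * t ^ 2 ≤ t ∧ 4 * t ≤ A + B + 2 * (a⁻¹ * b⁻¹ * t ^ 2) := by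
    rcases eq_or_lt_of_le (mul_nonneg ha0 hb0) with hab | hab
    · have ht00 : t = 0 := le_antisymm (by rw [← hab] at hCS; exact hCS) ht0
      constructor
      · rw [ht00]; simp
      · rw [ht00]; simp; linarith
    · have haa : 0 < a := by nlinarith
      have hbb : 0 < b := by nlinarith
      constructor
      · rw [show a⁻¹ * b⁻¹ * t ^ 2 = t ^ 2 / (a * b) by field_simp, div_le_iff₀ hab]
        nlinarith
      · rw [show a⁻¹ * b⁻¹ * t ^ 2 = t ^ 2 / (a * b) by field_simp]
        rw [← sub_nonneg]
        have key : 0 ≤ (A + B + 2 * (t ^ 2 / (a * b)) - 4 * t) * (a * b) := by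
          rw [sub_mul, add_mul, mul_assoc 2, div_mul_cancel₀ _ (ne_of_gt hab)]
          nlinarith [sq_nonneg (a * b - t), sq_nonneg (a - b), mul_nonneg ha0 hb0]
        nlinarith [key, hab]
  obtain ⟨hlow, hhigh⟩ := hmain
  constructor
  · rw [hfrob, hD2]
    apply Real.sqrt_le_sqrt
    linarith
  · rw [hfrob, hD2, ← Real.sqrt_mul (by norm_num : (0:ℝ) ≤ 2)]
    apply Real.sqrt_le_sqrt
    linarith
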